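/- arXiv:1308.1745 — 2 statements merged into one kernel-verified Lean document; each statement's English description precedes it below -/
import Mathlib

section
/- Fix p ∈ (0,1) and total rate b > 0. Consider splitting the packet into J equal descriptions, each of length b/J, with independent success events each of probability p^{b/J}. The probability that at least one description is received, 1 - (1 - p^{b/J})^J, is strictly increasing in J ∈ {1,2,3,...}. -/
/-- Splitting a fixed total rate b into J equal descriptions, each received
independently with probability p^{b/J}, the probability 1 - (1 - p^{b/J})^J
that at least one description is received is strictly increasing in J. -/
theorem mdc_split_reliability_strict_mono
    (p b : ℝ) (hp0 : 0 < p) (hp1 : p < 1) (hb : 0 < b) :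
    ∀ J J' : ℕ, 1 ≤ J → J < J' →
      1 - (1 - p ^ (b / J)) ^ J < 1 - (1 - p ^ (b / J')) ^ J' := by
  intro J J' hJ hJJ'
  have hL : Real.log p < 0 := Real.log_neg hp0 hp1
  set L := Real.log p with hLdef
  set g : ℝ → ℝ := fun t => t * Real.log (1 - Real.exp (L * (b / t))) with hg
  have hE_lt_one : ∀ t : ℝ, 0 < t → Real.exp (L * (b / t)) < 1 := by
    intro t ht
    rw [Real.exp_lt_one_iff]
    exact mul_neg_of_neg_of_pos hL (div_pos hb ht)
  have hderiv : ∀ t : ℝ, 0 < t → HasDerivAt g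
      (Real.log (1 - Real.exp (L * (b / t))) +
        t * (-(Real.exp (L * (b / t)) * (L * (b * -(t ^ 2)⁻¹))) /
          (1 - Real.exp (L * (b / t))))) t := by
    intro t ht
    have h1 : HasDerivAt (fun s : ℝ => b / s) (b * -(t ^ 2)⁻¹) t := by
      simpa [div_eq_mul_inv, mul_comm] using ((hasDerivAt_inv ht.ne').const_mul b)
    have h2 := h1.const_mul L
    have h3 := h2.exp
    have h4 := h3.const_sub 1
    have hne : 1 - Real.exp (L * (b / t)) ≠ 0 := by
      have := hE_lt_one t ht; linarith
    have h5 := h4.log hne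
    have h6 := (hasDerivAt_id t).mul h5
    simpa [hg, Pi.mul_def] using h6
  have hderiv_neg : ∀ t : ℝ, 0 < t →
      Real.log (1 - Real.exp (L * (b / t))) +
        t * (-(Real.exp (L * (b / t)) * (L * (b * -(t ^ 2)⁻¹))) /
          (1 - Real.exp (L * (b / t)))) < 0 := by
    intro t ht
    have hE1 := hE_lt_one t ht
    have hEpos : 0 < Real.exp (L * (b / t)) := Real.exp_pos _
    have hlogneg : Real.log (1 - Real.exp (L * (b / t))) < 0 :=
      Real.log_neg (by linarith) (by linarith)
    have hnum : -(Real.exp (L * (b / t)) * (L * (b * -(t ^ 2)⁻¹))) < 0 := by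
      have ht2 : (0:ℝ) < (t ^ 2)⁻¹ := by positivity
      have : 0 < L * (b * -(t ^ 2)⁻¹) := by
        apply mul_pos_of_neg_of_neg hL
        nlinarith
      nlinarith
    have hfrac : -(Real.exp (L * (b / t)) * (L * (b * -(t ^ 2)⁻¹))) /
        (1 - Real.exp (L * (b / t))) < 0 :=
      div_neg_of_neg_of_pos hnum (by linarith)
    nlinarith
  have hanti : StrictAntiOn g (Set.Ici (1:ℝ)) := by
    apply strictAntiOn_of_deriv_neg (convex_Ici 1)
    · intro x hx
      exact (hderiv x (lt_of_lt_of_le one_pos hx)).differentiableAt.continuousAt.continuousWithinAt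
    · intro x hx
      rw [interior_Ici] at hx
      have hx0 : 0 < x := lt_trans one_pos hx
      rw [(hderiv x hx0).deriv]
      exact hderiv_neg x hx0
  -- relate g to the expression
  have hexp : ∀ n : ℕ, 1 ≤ n → Real.exp (g n) = (1 - p ^ (b / n)) ^ n := by
    intro n hn
    have hn0 : (0:ℝ) < n := by exact_mod_cast hn
    have hrp : p ^ (b / (n:ℝ)) = Real.exp (L * (b / n)) := by
      rw [Real.rpow_def_of_pos hp0]
    have hx : (0:ℝ) < 1 - p ^ (b / (n:ℝ)) := by
      rw [hrp]; have := hE_lt_one n hn0; linarith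
    rw [hg]
    simp only
    rw [← hrp, Real.exp_nat_mul, Real.exp_log hx]
  have hJ1 : (1:ℝ) ≤ (J:ℝ) := by exact_mod_cast hJ
  have hJ'1 : (1:ℝ) ≤ (J':ℝ) := by exact_mod_cast le_of_lt (lt_of_le_of_lt hJ hJJ')
  have hlt : (J:ℝ) < (J':ℝ) := by exact_mod_cast hJJ'
  have := hanti hJ1 hJ'1 hlt
  have hkey : (1 - p ^ (b / J')) ^ J' < (1 - p ^ (b / J)) ^ J := by
    rw [← hexp J hJ, ← hexp J' (le_of_lt (lt_of_le_of_lt hJ hJJ'))]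
    exact Real.exp_lt_exp.mpr this
  linarith
end

section
/- For p ∈ (0,1) fixed, the function J ↦ (1 - p^{1/J})^J on positive integers J is strictly decreasing; equivalently, the probability 1 - (1-p^{1/J})^J of receiving at least one of J independent descriptions, each succeeding with probability p^{1/J}, is strictly increasing in J. -/
open Real in
private lemma mdc_aux_hasDerivAt {p : ℝ} (hp0 : 0 < p) (hp1 : p < 1) {x : ℝ}
    (hx : 0 < x) :
    HasDerivAt (fun y => Real.log (1 - p ^ y) / y)
      ((-(p ^ x * Real.log p) / (1 - p ^ x) * x - Real.log (1 - p ^ x) * 1) / x ^ 2) x := by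
  have hpx1 : p ^ x < 1 := Real.rpow_lt_one hp0.le hp1 hx
  have hne : 1 - p ^ x ≠ 0 := by linarith
  have h1 : HasDerivAt (fun y : ℝ => 1 - p ^ y) (-(p ^ x * Real.log p)) x := by
    simpa using ((Real.hasStrictDerivAt_const_rpow hp0 x).hasDerivAt).const_sub (1:ℝ)
  exact (h1.log hne).div (hasDerivAt_id x) hx.ne'

open Real in
private lemma mdc_aux_strictMono {p : ℝ} (hp0 : 0 < p) (hp1 : p < 1) :
    StrictMonoOn (fun y => Real.log (1 - p ^ y) / y) (Set.Ioi (0:ℝ)) := by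
  apply strictMonoOn_of_deriv_pos (convex_Ioi 0)
  · intro x hx
    exact ((mdc_aux_hasDerivAt hp0 hp1 hx).continuousAt).continuousWithinAt
  · intro x hx
    rw [interior_Ioi] at hx
    rw [(mdc_aux_hasDerivAt hp0 hp1 hx).deriv]
    have hpx0 : 0 < p ^ x := Real.rpow_pos_of_pos hp0 x
    have hpx1 : p ^ x < 1 := Real.rpow_lt_one hp0.le hp1 hx
    have hlogp : Real.log p < 0 := Real.log_neg hp0 hp1
    have hlog1 : Real.log (1 - p ^ x) < 0 := Real.log_neg (by linarith) (by linarith)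
    have ht1 : 0 < -(p ^ x * Real.log p) / (1 - p ^ x) * x := by
      apply mul_pos (div_pos (by nlinarith [mul_pos hpx0 (neg_pos.mpr hlogp)]) (by linarith)) hx
    have hx0 : (0:ℝ) < x := hx
    have hsq : 0 < x ^ 2 := by positivity
    apply div_pos _ hsq
    nlinarith

/-- For fixed p ∈ (0,1), J ↦ (1 - p^{1/J})^J is strictly decreasing on the
positive integers; equivalently the probability 1 - (1-p^{1/J})^J of receiving
at least one of J independent descriptions, each succeeding with probability
p^{1/J}, is strictly increasing in J. -/
theorem mdc_reliability_strict_mono (p : ℝ) (hp0 : 0 < p) (hp1 : p < 1) :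
    ∀ J J' : ℕ, 1 ≤ J → J < J' →
      (1 - p ^ ((1:ℝ) / J')) ^ J' < (1 - p ^ ((1:ℝ) / J)) ^ J ∧
      1 - (1 - p ^ ((1:ℝ) / J)) ^ J < 1 - (1 - p ^ ((1:ℝ) / J')) ^ J' := by
  intro J J' hJ hJJ'
  have hJ0 : (0:ℝ) < J := by exact_mod_cast Nat.lt_of_lt_of_le Nat.zero_lt_one hJ
  have hJ'0 : (0:ℝ) < J' := by exact_mod_cast Nat.lt_of_le_of_lt (Nat.zero_le J) hJJ'
  have hx : (0:ℝ) < 1 / J := by positivity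
  have hx' : (0:ℝ) < 1 / J' := by positivity
  have hlt : (1:ℝ) / J' < 1 / J := by
    apply one_div_lt_one_div_of_lt hJ0
    exact_mod_cast hJJ'
  have key := mdc_aux_strictMono hp0 hp1 hx' hx hlt
  simp only at key
  -- key : log (1 - p ^ (1/J')) / (1/J') < log (1 - p ^ (1/J)) / (1/J)
  have hb' : 0 < 1 - p ^ ((1:ℝ)/J') := by
    have := Real.rpow_lt_one hp0.le hp1 hx'
    linarith
  have hb : 0 < 1 - p ^ ((1:ℝ)/J) := by
    have := Real.rpow_lt_one hp0.le hp1 hx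
    linarith
  have hlogs : Real.log ((1 - p ^ ((1:ℝ)/J')) ^ J') < Real.log ((1 - p ^ ((1:ℝ)/J)) ^ J) := by
    rw [Real.log_pow, Real.log_pow]
    have e1 : Real.log (1 - p ^ ((1:ℝ)/J')) / (1/(J':ℝ)) = J' * Real.log (1 - p ^ ((1:ℝ)/J')) := by
      field_simp
    have e2 : Real.log (1 - p ^ ((1:ℝ)/J)) / (1/(J:ℝ)) = J * Real.log (1 - p ^ ((1:ℝ)/J)) := by
      field_simp
    rw [e1, e2] at key
    exact_mod_cast key
  have h1 : (1 - p ^ ((1:ℝ) / J')) ^ J' < (1 - p ^ ((1:ℝ) / J)) ^ J := by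
    have hpos' : (0:ℝ) < (1 - p ^ ((1:ℝ)/J')) ^ J' := pow_pos hb' _
    exact (Real.log_lt_log_iff hpos' (pow_pos hb _)).mp hlogs
  exact ⟨h1, by linarith⟩
end
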